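/- arXiv:2504.15971 — 3 statements merged into one kernel-verified Lean document; each statement's English description precedes it below -/
import Mathlib

section
/- Let K be a number field. There is an effectively computable constant c > 0 depending only on K with the following property: for every nonzero ideal 𝔞 ⊆ O_K there exists a nonzero element γ ∈ 𝔞 such that h(γ) ≤ c · log N(𝔞). Moreover, if 𝔞 is principal, γ may be chosen to be a generator of 𝔞. -/
open NumberField

/-- The denominator ideal of `x ∈ K`: the ideal of all `a ∈ O_K` with `a·x ∈ O_K`. -/
noncomputable def denomIdeal (K : Type*) [Field K] [NumberField K] (x : K) :
    Ideal (𝓞 K) :=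
  Submodule.comap (LinearMap.toSpanSingleton (𝓞 K) K x) 1

/-- The absolute logarithmic Weil height of `x ∈ K`, normalized to `ℚ`:
`h(x) = (1/[K:ℚ]) (log N(den(x)) + ∑_{w ∣ ∞} mult(w) · log⁺ w(x))`. -/
noncomputable def weilHeight {K : Type*} [Field K] [NumberField K] (x : K) : ℝ :=
  (Module.finrank ℚ K : ℝ)⁻¹ *
    (Real.log (Ideal.absNorm (denomIdeal K x)) +
      ∑ w : InfinitePlace K, (w.mult : ℝ) * Real.log (max 1 (w x)))

section aux

open NumberField.InfinitePlace NumberField.Units Module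

variable {K : Type*} [Field K] [NumberField K]

lemma denomIdeal_algebraMap (γ : 𝓞 K) : denomIdeal K (algebraMap (𝓞 K) K γ) = ⊤ := by
  rw [eq_top_iff]
  intro a _
  simp only [denomIdeal, Submodule.mem_comap, LinearMap.toSpanSingleton_apply,
    Submodule.one_eq_range, LinearMap.mem_range]
  exact ⟨a * γ, by simp [Algebra.linearMap_apply, map_mul, Algebra.smul_def]⟩

lemma weilHeight_le (γ : 𝓞 K) {B : ℝ} (hB : 0 ≤ B)
    (h : ∀ w : InfinitePlace K, (w.mult : ℝ) * Real.log (w (algebraMap (𝓞 K) K γ)) ≤ B) :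
    weilHeight (algebraMap (𝓞 K) K γ) ≤ (Fintype.card (InfinitePlace K) : ℝ) * B := by
  have hterm : ∀ w : InfinitePlace K,
      (w.mult : ℝ) * Real.log (max 1 (w (algebraMap (𝓞 K) K γ))) ≤ B := by
    intro w
    rcases le_or_gt (w (algebraMap (𝓞 K) K γ)) 1 with hw | hw
    · rw [max_eq_left hw, Real.log_one, mul_zero]; exact hB
    · rw [max_eq_right hw.le]; exact h w
  have hterm0 : ∀ w : InfinitePlace K,
      0 ≤ (w.mult : ℝ) * Real.log (max 1 (w (algebraMap (𝓞 K) K γ))) := fun w =>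
    mul_nonneg (Nat.cast_nonneg _) (Real.log_nonneg (le_max_left _ _))
  have hsum : ∑ w : InfinitePlace K, (w.mult : ℝ) * Real.log (max 1 (w (algebraMap (𝓞 K) K γ)))
      ≤ (Fintype.card (InfinitePlace K) : ℝ) * B := by
    calc _ ≤ ∑ _w : InfinitePlace K, B := Finset.sum_le_sum fun w _ => hterm w
    _ = _ := by rw [Finset.sum_const, Finset.card_univ, nsmul_eq_mul]
  rw [weilHeight, denomIdeal_algebraMap, Ideal.absNorm_top, Nat.cast_one, Real.log_one, zero_add]
  calc (Module.finrank ℚ K : ℝ)⁻¹ * ∑ w : InfinitePlace K,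
        (w.mult : ℝ) * Real.log (max 1 (w (algebraMap (𝓞 K) K γ)))
      ≤ 1 * ∑ w : InfinitePlace K,
        (w.mult : ℝ) * Real.log (max 1 (w (algebraMap (𝓞 K) K γ))) := by
        refine mul_le_mul_of_nonneg_right ?_ (Finset.sum_nonneg fun w _ => hterm0 w)
        rw [inv_le_one_iff₀]
        right
        exact_mod_cast Module.finrank_pos (R := ℚ) (M := K)
    _ ≤ _ := by rw [one_mul]; exact hsum

lemma sum_mult_log (γ : 𝓞 K) (hγ : γ ≠ 0) :
    ∑ w : InfinitePlace K, (w.mult : ℝ) * Real.log (w (algebraMap (𝓞 K) K γ)) =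
      Real.log (Ideal.absNorm (Ideal.span {γ})) := by
  have hK : algebraMap (𝓞 K) K γ ≠ 0 := by
    simpa using hγ
  have h0 : ∀ w : InfinitePlace K, w (algebraMap (𝓞 K) K γ) ≠ 0 := fun w =>
    (pos_iff.mpr hK).ne'
  have h1 : ∑ w : InfinitePlace K, (w.mult : ℝ) * Real.log (w (algebraMap (𝓞 K) K γ)) =
      Real.log (∏ w : InfinitePlace K, (w (algebraMap (𝓞 K) K γ)) ^ w.mult) := by
    rw [Real.log_prod (fun w _ => pow_ne_zero _ (h0 w))]
    exact Finset.sum_congr rfl fun w _ => by rw [Real.log_pow]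
  rw [h1, prod_eq_abs_norm, Ideal.absNorm_span_singleton, ← Algebra.coe_norm_int]
  congr 1
  push_cast [Nat.cast_natAbs]
  norm_num

end aux

section aux2

open NumberField.InfinitePlace NumberField.Units NumberField.Units.dirichletUnitTheorem Module

open scoped Classical

variable {K : Type*} [Field K] [NumberField K]

lemma exists_bound : ∃ C : ℝ, 0 ≤ C ∧ ∀ x : {w : InfinitePlace K // w ≠ w₀} → ℝ,
    ∃ u : (𝓞 K)ˣ, ‖logEmbedding K (Additive.ofMul u) + x‖ ≤ C := by
  classical
  have h1 : Module.Finite ℤ (unitLattice K) := ZLattice.module_finite ℝ _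
  have h2 : Module.Free ℤ (unitLattice K) := ZLattice.module_free ℝ _
  let b₀ := Module.Free.chooseBasis ℤ (unitLattice K)
  let b := Basis.ofZLatticeBasis ℝ (unitLattice K) b₀
  obtain ⟨C, hC⟩ := isBounded_iff_forall_norm_le.mp (ZSpan.fundamentalDomain_isBounded b)
  refine ⟨max C 0, le_max_right _ _, fun x => ?_⟩
  have hfl : ((-x) - ZSpan.fract b (-x)) = ((ZSpan.floor b (-x) : {w : InfinitePlace K // w ≠ w₀} → ℝ)) := by
    rw [ZSpan.fract_apply]; ring
  have hmem : ((-x) - ZSpan.fract b (-x)) ∈ unitLattice K := by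
    rw [hfl]
    exact (le_of_eq (b₀.ofZLatticeBasis_span ℝ)) (ZSpan.floor b (-x)).2
  obtain ⟨a, -, ha⟩ := hmem
  refine ⟨Additive.toMul a, ?_⟩
  have ha' : logEmbedding K a = -x - ZSpan.fract b (-x) := ha
  have h3 : logEmbedding K (Additive.ofMul (Additive.toMul a)) + x = -(ZSpan.fract b (-x)) := by
    show logEmbedding K a + x = _
    rw [ha']; abel
  rw [h3, norm_neg]
  exact le_max_of_le_left (hC _ (ZSpan.fract_mem_fundamentalDomain b (-x)))


lemma exists_unit_mul : ∃ C : ℝ, 0 ≤ C ∧ ∀ γ₀ : 𝓞 K, γ₀ ≠ 0 → ∃ u : (𝓞 K)ˣ,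
    (Ideal.span {((u : 𝓞 K) * γ₀)} = Ideal.span {γ₀}) ∧
    ∀ w : InfinitePlace K, (w.mult : ℝ) * Real.log (w (algebraMap (𝓞 K) K ((u : 𝓞 K) * γ₀))) ≤
      Real.log (Ideal.absNorm (Ideal.span {γ₀})) + C := by
  obtain ⟨C₀, hC₀, hC⟩ := exists_bound (K := K)
  have hp1 : (1 : ℝ) ≤ (Fintype.card (InfinitePlace K) : ℝ) := by
    exact_mod_cast Fintype.card_pos (α := InfinitePlace K)
  refine ⟨(Fintype.card (InfinitePlace K) : ℝ) * C₀, mul_nonneg (by linarith) hC₀,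
    fun γ₀ hγ₀ => ?_⟩
  set x : {w : InfinitePlace K // w ≠ w₀} → ℝ :=
    fun w => ((w : InfinitePlace K).mult : ℝ) *
      Real.log ((w : InfinitePlace K) (algebraMap (𝓞 K) K γ₀)) with hx
  obtain ⟨u, hu⟩ := hC x
  set γ : 𝓞 K := (u : 𝓞 K) * γ₀ with hγdef
  have hγ : γ ≠ 0 := mul_ne_zero u.ne_zero hγ₀
  have hKγ₀ : algebraMap (𝓞 K) K γ₀ ≠ 0 := by simpa using hγ₀
  have hKu : algebraMap (𝓞 K) K (u : 𝓞 K) ≠ 0 := by simpa using u.ne_zero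
  have hspan : Ideal.span {γ} = Ideal.span {γ₀} := by
    rw [Ideal.span_singleton_eq_span_singleton]
    have hassoc : Associated γ₀ γ := ⟨u, mul_comm γ₀ (u : 𝓞 K)⟩
    exact hassoc.symm
  set f : InfinitePlace K → ℝ :=
    fun w => (w.mult : ℝ) * Real.log (w (algebraMap (𝓞 K) K γ)) with hf
  have key : ∀ (w : InfinitePlace K) (hw : w ≠ w₀),
      f w = (logEmbedding K (Additive.ofMul u) + x) ⟨w, hw⟩ := by
    intro w hw
    rw [Pi.add_apply, logEmbedding_component, hf, hx]
    have hmul : algebraMap (𝓞 K) K γ =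
        algebraMap (𝓞 K) K (u : 𝓞 K) * algebraMap (𝓞 K) K γ₀ := map_mul _ _ _
    simp only [hmul, map_mul, Real.log_mul ((pos_iff.mpr hKu).ne') ((pos_iff.mpr hKγ₀).ne'),
      mul_add]
  have habs : ∀ (w : {w : InfinitePlace K // w ≠ w₀}), |f w.1| ≤ C₀ := by
    intro w
    rw [key w.1 w.2]
    calc |(logEmbedding K (Additive.ofMul u) + x) ⟨w.1, w.2⟩|
        = ‖(logEmbedding K (Additive.ofMul u) + x) ⟨w.1, w.2⟩‖ := (Real.norm_eq_abs _).symm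
      _ ≤ ‖logEmbedding K (Additive.ofMul u) + x‖ := norm_le_pi_norm _ _
      _ ≤ C₀ := hu
  have hA : 0 ≤ Real.log (Ideal.absNorm (Ideal.span {γ₀})) := by
    refine Real.log_nonneg ?_
    have : Ideal.absNorm (Ideal.span {γ₀}) ≠ 0 := by
      rw [Ne, Ideal.absNorm_eq_zero_iff, Ideal.span_singleton_eq_bot]
      exact hγ₀
    exact_mod_cast Nat.one_le_iff_ne_zero.mpr this
  have hsum : ∑ w : InfinitePlace K, f w = Real.log (Ideal.absNorm (Ideal.span {γ₀})) := by
    rw [← hspan]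
    exact sum_mult_log γ hγ
  have herase : -((Fintype.card (InfinitePlace K) : ℝ) * C₀) ≤
      ∑ w ∈ Finset.univ.erase (w₀ : InfinitePlace K), f w := by
    have h1 : ∀ w ∈ Finset.univ.erase (w₀ : InfinitePlace K), -C₀ ≤ f w := by
      intro w hw
      have := habs ⟨w, (Finset.mem_erase.mp hw).1⟩
      exact (abs_le.mp this).1
    calc -((Fintype.card (InfinitePlace K) : ℝ) * C₀)
        ≤ -(((Finset.univ.erase (w₀ : InfinitePlace K)).card : ℝ) * C₀) := by
          have : ((Finset.univ.erase (w₀ : InfinitePlace K)).card : ℝ) ≤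
              (Fintype.card (InfinitePlace K) : ℝ) := by
            exact_mod_cast Finset.card_le_card (Finset.erase_subset _ _) |>.trans
              (le_of_eq (Finset.card_univ))
          nlinarith
      _ = ∑ _w ∈ Finset.univ.erase (w₀ : InfinitePlace K), (-C₀) := by
          rw [Finset.sum_const, nsmul_eq_mul]; ring
      _ ≤ _ := Finset.sum_le_sum h1
  refine ⟨u, hspan, fun w => ?_⟩
  by_cases hw : w = w₀
  · subst hw
    have h2 : f w₀ + ∑ w ∈ Finset.univ.erase (w₀ : InfinitePlace K), f w =
        ∑ w : InfinitePlace K, f w :=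
      Finset.add_sum_erase _ f (Finset.mem_univ _)
    have : f w₀ = Real.log (Ideal.absNorm (Ideal.span {γ₀})) -
        ∑ w ∈ Finset.univ.erase (w₀ : InfinitePlace K), f w := by
      rw [← hsum]; linarith
    rw [show (w₀.mult : ℝ) * Real.log (w₀ (algebraMap (𝓞 K) K γ)) = f w₀ from rfl, this]
    linarith
  · have := habs ⟨w, hw⟩
    have h3 : f w ≤ C₀ := (abs_le.mp this).2
    have h4 : C₀ ≤ (Fintype.card (InfinitePlace K) : ℝ) * C₀ := by nlinarith
    show f w ≤ _
    linarith

end aux2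

set_option maxHeartbeats 1000000 in
open NumberField.InfinitePlace NumberField.Units NumberField.Units.dirichletUnitTheorem Module in
/-- For a number field `K` there is an effectively computable constant `c > 0` such that
every nonzero ideal `𝔞 ⊆ O_K` contains a nonzero element `γ` with `h(γ) ≤ c log N(𝔞)`;
moreover if `𝔞` is principal, `γ` may be chosen to be a generator of `𝔞`. -/
theorem stmt6 (K : Type*) [Field K] [NumberField K] :
    ∃ c : ℝ, 0 < c ∧ ∀ 𝔞 : Ideal (𝓞 K), 𝔞 ≠ ⊥ →
      (∃ γ ∈ 𝔞, γ ≠ 0 ∧ weilHeight (algebraMap (𝓞 K) K γ) ≤ c * Real.log (Ideal.absNorm 𝔞)) ∧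
      (𝔞.IsPrincipal → ∃ γ : 𝓞 K, 𝔞 = Ideal.span {γ} ∧
        weilHeight (algebraMap (𝓞 K) K γ) ≤ c * Real.log (Ideal.absNorm 𝔞)) := by
  classical
  obtain ⟨C, hC0, hC⟩ := exists_unit_mul (K := K)
  set p : ℝ := (Fintype.card (InfinitePlace K) : ℝ) with hp
  set n : ℝ := (Module.finrank ℚ K : ℝ) with hn
  have hp1 : (1:ℝ) ≤ p := by
    rw [hp]; exact_mod_cast Fintype.card_pos (α := InfinitePlace K)
  have hn1 : (1:ℝ) ≤ n := by
    rw [hn]; exact_mod_cast Module.finrank_pos (R := ℚ) (M := K)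
  have hlog2 : 0 < Real.log 2 := Real.log_pos one_lt_two
  have hq0 : 0 ≤ p * n * C / Real.log 2 :=
    div_nonneg (mul_nonneg (mul_nonneg (by linarith) (by linarith)) hC0) hlog2.le
  refine ⟨1 + p * n + p * n * C / Real.log 2, by nlinarith, fun 𝔞 h𝔞 => ?_⟩
  have hN0 : Ideal.absNorm 𝔞 ≠ 0 := by
    rw [Ne, Ideal.absNorm_eq_zero_iff]; exact h𝔞
  have hN1 : 1 ≤ Ideal.absNorm 𝔞 := Nat.one_le_iff_ne_zero.mpr hN0
  rcases eq_or_lt_of_le hN1 with hN | hN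
  · -- `N(𝔞) = 1`, i.e. `𝔞 = ⊤`: take `γ = 1`.
    have htop : 𝔞 = ⊤ := Ideal.absNorm_eq_one_iff.mp hN.symm
    have hlogN : Real.log (Ideal.absNorm 𝔞) = 0 := by rw [← hN]; simp
    have hht : weilHeight (algebraMap (𝓞 K) K (1 : 𝓞 K)) ≤ 0 := by
      have h := weilHeight_le (K := K) (1 : 𝓞 K) (le_refl (0:ℝ)) (fun w => by simp)
      simpa using h
    constructor
    · exact ⟨1, by simp [htop], one_ne_zero, by rw [hlogN]; simpa using hht⟩
    · exact fun _ => ⟨1, by rw [htop, Ideal.span_singleton_one], by rw [hlogN]; simpa using hht⟩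
  · -- `N(𝔞) ≥ 2`.
    have h2N : (2:ℝ) ≤ (Ideal.absNorm 𝔞 : ℝ) := by exact_mod_cast hN
    have hlogN : Real.log 2 ≤ Real.log (Ideal.absNorm 𝔞) := Real.log_le_log (by norm_num) h2N
    have hlogN0 : 0 < Real.log (Ideal.absNorm 𝔞) := lt_of_lt_of_le hlog2 hlogN
    have e1 : p * n * C / Real.log 2 * Real.log 2 = p * n * C :=
      div_mul_cancel₀ _ hlog2.ne'
    have e2 : p * n * C ≤ p * n * C / Real.log 2 * Real.log (Ideal.absNorm 𝔞) := by
      calc p * n * C = p * n * C / Real.log 2 * Real.log 2 := e1.symm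
        _ ≤ _ := mul_le_mul_of_nonneg_left hlogN hq0
    constructor
    · -- general element: `γ = u · N(𝔞)`.
      set γ₀ : 𝓞 K := (Ideal.absNorm 𝔞 : 𝓞 K) with hγ₀def
      have hγ₀ : γ₀ ≠ 0 := by rw [hγ₀def]; exact_mod_cast hN0
      obtain ⟨u, hspan, hu⟩ := hC γ₀ hγ₀
      have hnorm : Ideal.absNorm (Ideal.span {γ₀}) =
          (Ideal.absNorm 𝔞) ^ (Module.finrank ℚ K) := by
        rw [Ideal.absNorm_span_singleton, hγ₀def,
          show ((Ideal.absNorm 𝔞 : ℕ) : 𝓞 K) = algebraMap ℤ (𝓞 K) (Ideal.absNorm 𝔞 : ℤ) by simp,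
          Algebra.norm_algebraMap_of_basis (NumberField.RingOfIntegers.basis K),
          Int.natAbs_pow,
          show Fintype.card (Module.Free.ChooseBasisIndex ℤ (𝓞 K)) = Module.finrank ℚ K by
            rw [← Module.finrank_eq_card_chooseBasisIndex, NumberField.RingOfIntegers.rank]]
        simp
      have hB : ∀ w : InfinitePlace K,
          (w.mult : ℝ) * Real.log (w (algebraMap (𝓞 K) K ((u : 𝓞 K) * γ₀))) ≤
            n * Real.log (Ideal.absNorm 𝔞) + C := by
        intro w
        refine (hu w).trans ?_
        rw [hnorm]
        have : Real.log ((Ideal.absNorm 𝔞 ^ (Module.finrank ℚ K) : ℕ) : ℝ) =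
            n * Real.log (Ideal.absNorm 𝔞) := by
          push_cast
          rw [Real.log_pow, hn]
        rw [this]
      have hBnn : 0 ≤ n * Real.log (Ideal.absNorm 𝔞) + C := by nlinarith
      have hh := weilHeight_le (K := K) ((u : 𝓞 K) * γ₀) hBnn hB
      refine ⟨(u : 𝓞 K) * γ₀, Ideal.mul_mem_left _ _ (hγ₀def ▸ Ideal.absNorm_mem 𝔞),
        mul_ne_zero u.ne_zero hγ₀, hh.trans ?_⟩
      rw [← hp]
      set L : ℝ := Real.log (Ideal.absNorm 𝔞) with hL
      set q : ℝ := p * n * C / Real.log 2 with hq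
      have f1 : p * C ≤ p * n * C := by
        calc p * C = p * C * 1 := by ring
          _ ≤ p * C * n := mul_le_mul_of_nonneg_left hn1 (mul_nonneg (by linarith) hC0)
          _ = p * n * C := by ring
      calc p * (n * L + C) = p * n * L + p * C := by ring
        _ ≤ p * n * L + p * n * C := by linarith
        _ ≤ p * n * L + q * L := by linarith [e2]
        _ ≤ (1 + p * n + q) * L := by
            have hr : (1 + p * n + q) * L = L + p * n * L + q * L := by ring
            rw [hr]; linarith [hlogN0.le]
    · -- principal case: `γ = u · γ₀` for `γ₀` a generator.
      intro hpr
      obtain ⟨γ₀, hsp⟩ := hpr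
      have hγ₀ : γ₀ ≠ 0 := by
        intro h0
        apply h𝔞
        rw [hsp, h0]
        exact Ideal.span_singleton_eq_bot.mpr rfl
      obtain ⟨u, hspan, hu⟩ := hC γ₀ hγ₀
      have hB : ∀ w : InfinitePlace K,
          (w.mult : ℝ) * Real.log (w (algebraMap (𝓞 K) K ((u : 𝓞 K) * γ₀))) ≤
            Real.log (Ideal.absNorm 𝔞) + C := by
        intro w
        refine (hu w).trans ?_
        rw [show Ideal.span {γ₀} = 𝔞 from hsp.symm]
      have hBnn : 0 ≤ Real.log (Ideal.absNorm 𝔞) + C := by nlinarith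
      have hh := weilHeight_le (K := K) ((u : 𝓞 K) * γ₀) hBnn hB
      refine ⟨(u : 𝓞 K) * γ₀, by rw [hsp]; exact hspan.symm, hh.trans ?_⟩
      rw [← hp]
      set L : ℝ := Real.log (Ideal.absNorm 𝔞) with hL
      set q : ℝ := p * n * C / Real.log 2 with hq
      have f1 : p * C ≤ p * n * C := by
        calc p * C = p * C * 1 := by ring
          _ ≤ p * C * n := mul_le_mul_of_nonneg_left hn1 (mul_nonneg (by linarith) hC0)
          _ = p * n * C := by ring
      have f2 : p * L ≤ p * n * L := by
        calc p * L = p * L * 1 := by ring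
          _ ≤ p * L * n := mul_le_mul_of_nonneg_left hn1 (mul_nonneg (by linarith) hlogN0.le)
          _ = p * n * L := by ring
      calc p * (L + C) = p * L + p * C := by ring
        _ ≤ p * n * L + p * n * C := by linarith
        _ ≤ p * n * L + q * L := by linarith [e2]
        _ ≤ (1 + p * n + q) * L := by
            have hr : (1 + p * n + q) * L = L + p * n * L + q * L := by ring
            rw [hr]; linarith [hlogN0.le]
end

section
/- Let f, g ∈ ℂ[t] be coprime polynomials, not both constant. Then the polynomial f² + g³ is non-constant. -/
open Polynomial UniqueFactorizationMonoid UniqueFactorizationDomain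

lemma coprime_of_isUnit_right {R : Type*} [CommSemiring R] {x u : R} (hu : IsUnit u) :
    IsCoprime x u := by
  have := (isCoprime_mul_unit_left_right hu x 1).mpr isCoprime_one_right
  simpa using this

/-- Let `f, g ∈ ℂ[t]` be coprime polynomials, not both constant.
Then `f² + g³` is non-constant. -/
theorem stmt7 (f g : Polynomial ℂ) (hcop : IsCoprime f g)
    (hconst : ¬ (f.natDegree = 0 ∧ g.natDegree = 0)) :
    (f ^ 2 + g ^ 3).natDegree ≠ 0 := by
  intro h
  set c : Polynomial ℂ := f ^ 2 + g ^ 3 with hc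
  -- f and g are nonzero
  have hf : f ≠ 0 := by
    rintro rfl
    rw [hc, zero_pow (by norm_num), zero_add, natDegree_pow] at h
    exact hconst ⟨natDegree_zero, by omega⟩
  have hg : g ≠ 0 := by
    rintro rfl
    rw [hc, zero_pow (by norm_num), add_zero, natDegree_pow] at h
    exact hconst ⟨by omega, natDegree_zero⟩
  have hcop23 : IsCoprime (f ^ 2) (g ^ 3) := (hcop.pow : _)
  by_cases hczero : c = 0
  · -- then g ^ 3 divides f ^ 2, so g is a unit, etc.
    have hdvd : g ^ 3 ∣ f ^ 2 := by
      refine ⟨-1, ?_⟩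
      have : f ^ 2 = -(g ^ 3) := by linear_combination hczero
      rw [this]; ring
    have hunit : IsUnit (g ^ 3) := hcop23.symm.isUnit_of_dvd' dvd_rfl hdvd
    have hgdeg : g.natDegree = 0 := by
      have := natDegree_eq_zero_of_isUnit hunit
      rw [natDegree_pow] at this; omega
    have hfdeg : f.natDegree = 0 := by
      have : f ^ 2 = -(g ^ 3) := by linear_combination hczero
      have h2 : (f ^ 2).natDegree = (g ^ 3).natDegree := by rw [this, natDegree_neg]
      rw [natDegree_pow, natDegree_pow] at h2; omega
    exact hconst ⟨hfdeg, hgdeg⟩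
  · -- c is a nonzero constant, hence a unit
    have hcunit : IsUnit c := isUnit_iff.mpr
      ⟨c.coeff 0, isUnit_iff_ne_zero.mpr (by
        intro h0
        apply hczero
        rw [Polynomial.eq_C_of_natDegree_eq_zero h, h0, map_zero]),
        (Polynomial.eq_C_of_natDegree_eq_zero h).symm⟩
    have hncunit : IsUnit (-c) := hcunit.neg
    have habc := Polynomial.abc (pow_ne_zero 2 hf) (pow_ne_zero 3 hg) (neg_ne_zero.mpr hczero)
      hcop23
      (by rw [hc]; ring)
    rcases habc with ⟨h1, h2, _⟩ | ⟨hd1, hd2, _⟩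
    · -- degree bounds
      set R := (radical (f ^ 2 * g ^ 3 * -c)).natDegree with hR
      have hrad : radical (f ^ 2 * g ^ 3 * -c) = radical f * radical g := by
        have hc1 : IsCoprime (f ^ 2 * g ^ 3) (-c) := coprime_of_isUnit_right hncunit
        rw [radical_mul hc1.isRelPrime, radical_of_isUnit hncunit, mul_one,
          radical_mul hcop23.isRelPrime, radical_pow f (by norm_num), radical_pow g (by norm_num)]
      have hRle : R ≤ f.natDegree + g.natDegree := by
        rw [hR, hrad, natDegree_mul (radical_ne_zero (a := f)) (radical_ne_zero (a := g))]
        exact Nat.add_le_add (natDegree_le_of_dvd (radical_dvd_self (a := f)) hf)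
          (natDegree_le_of_dvd (radical_dvd_self (a := g)) hg)
      rw [natDegree_pow] at h1
      rw [natDegree_pow] at h2
      omega
    · -- derivatives zero: f^2 and g^3 constant
      have h1 : (f ^ 2).natDegree = 0 := natDegree_eq_zero_of_derivative_eq_zero hd1
      have h2 : (g ^ 3).natDegree = 0 := natDegree_eq_zero_of_derivative_eq_zero hd2
      rw [natDegree_pow] at h1 h2
      exact hconst ⟨by omega, by omega⟩
end

section
/- Let A, B ∈ ℤ[t] be polynomials that are coprime over ℚ, not both constant, and such that D = −16(4A³ + 27B²) ∈ ℤ[t] is not the zero polynomial. Then the polynomial D has at least two distinct complex roots. -/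
open Polynomial UniqueFactorizationMonoid

private lemma radical_natDegree_le_one {p : ℂ[X]} (hp : p ≠ 0)
    (h : ∀ z w : ℂ, p.IsRoot z → p.IsRoot w → z = w) :
    (radical p).natDegree ≤ 1 := by
  classical
  have hcard : p.roots.card = p.natDegree :=
    Polynomial.splits_iff_card_roots.1 (IsAlgClosed.splits p)
  rcases Multiset.empty_or_exists_mem p.roots with h0 | ⟨α, hα⟩
  · -- no roots: p is a nonzero constant, hence a unit
    have hdeg : p.natDegree = 0 := by rw [← hcard, h0]; simp
    obtain ⟨c, rfl⟩ := Polynomial.natDegree_eq_zero.1 hdeg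
    have hc : c ≠ 0 := fun h => hp (by simp [h])
    rw [radical_of_isUnit (Polynomial.isUnit_C.2 (isUnit_iff_ne_zero.2 hc))]
    simp
  · have hrep : p.roots = Multiset.replicate p.natDegree α := by
      rw [Multiset.eq_replicate]
      exact ⟨hcard, fun b hb => h b α (isRoot_of_mem_roots hb) (isRoot_of_mem_roots hα)⟩
    have hprod : C p.leadingCoeff * (X - C α) ^ p.natDegree = p := by
      have := Polynomial.C_leadingCoeff_mul_prod_multiset_X_sub_C (p := p) hcard
      rw [hrep] at this
      simpa [Multiset.map_replicate, Multiset.prod_replicate] using this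
    have hassoc : Associated p ((X - C α) ^ p.natDegree) := by
      refine Associated.symm ⟨(Polynomial.isUnit_C.2 (isUnit_iff_ne_zero.2
        (leadingCoeff_ne_zero.2 hp))).unit, ?_⟩
      rw [mul_comm] at hprod
      simpa using hprod
    have hn : 0 < p.natDegree := by
      rw [← hcard]
      exact Multiset.card_pos.2 (fun hc => by simp [hc] at hα)
    rw [radical_eq_of_associated hassoc, radical_pow _ hn.ne']
    calc (radical (X - C α)).natDegree ≤ (X - C α).natDegree :=
          Polynomial.natDegree_le_of_dvd radical_dvd_self (X_sub_C_ne_zero α)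
      _ = 1 := natDegree_X_sub_C α

/-- Let `A, B ∈ ℤ[t]` be coprime over `ℚ`, not both constant, with
`D = -16(4A³ + 27B²)` not the zero polynomial.  Then `D` has at least two
distinct complex roots. -/
theorem stmt8 (A B : Polynomial ℤ)
    (hcop : IsCoprime (A.map (Int.castRingHom ℚ)) (B.map (Int.castRingHom ℚ)))
    (hconst : ¬ (A.natDegree = 0 ∧ B.natDegree = 0))
    (hD : (-16 : Polynomial ℤ) * (4 * A ^ 3 + 27 * B ^ 2) ≠ 0) :
    ∃ z w : ℂ, z ≠ w ∧
      Polynomial.aeval z ((-16 : Polynomial ℤ) * (4 * A ^ 3 + 27 * B ^ 2)) = 0 ∧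
      Polynomial.aeval w ((-16 : Polynomial ℤ) * (4 * A ^ 3 + 27 * B ^ 2)) = 0 := by
  classical
  by_contra hcon
  push_neg at hcon
  set φ : ℤ →+* ℂ := Int.castRingHom ℂ with hφ
  have hinj : Function.Injective φ := Int.cast_injective
  set a : ℂ[X] := A.map φ with ha
  set b : ℂ[X] := B.map φ with hb
  have hdA : a.natDegree = A.natDegree := natDegree_map_eq_of_injective hinj A
  have hdB : b.natDegree = B.natDegree := natDegree_map_eq_of_injective hinj B
  -- coprimality over ℂ
  have hcopC : IsCoprime a b := by
    have hcomp : (algebraMap ℚ ℂ).comp (Int.castRingHom ℚ) = φ := by ext n; simp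
    have := hcop.map (Polynomial.mapRingHom (algebraMap ℚ ℂ))
    simpa [Polynomial.coe_mapRingHom, Polynomial.map_map, hcomp] using this
  -- A, B nonzero
  have hA0 : A ≠ 0 := by
    rintro rfl
    have hB : IsUnit (B.map (Int.castRingHom ℚ)) := by
      simpa [isCoprime_zero_left] using hcop
    have hBdeg := natDegree_eq_zero_of_isUnit hB
    rw [natDegree_map_eq_of_injective (Int.castRingHom ℚ).injective_int B] at hBdeg
    exact hconst ⟨by simp, hBdeg⟩
  have hB0 : B ≠ 0 := by
    rintro rfl
    have hA : IsUnit (A.map (Int.castRingHom ℚ)) := by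
      simpa [isCoprime_zero_right] using hcop
    have hAdeg := natDegree_eq_zero_of_isUnit hA
    rw [natDegree_map_eq_of_injective (Int.castRingHom ℚ).injective_int A] at hAdeg
    exact hconst ⟨hAdeg, by simp⟩
  have ha0 : a ≠ 0 := by simpa [ha, Polynomial.map_eq_zero_iff hinj] using hA0
  have hb0 : b ≠ 0 := by simpa [hb, Polynomial.map_eq_zero_iff hinj] using hB0
  -- the three polynomials
  have h4 : IsUnit (C (4 : ℂ)) := Polynomial.isUnit_C.2 (isUnit_iff_ne_zero.2 (by norm_num))
  have h27 : IsUnit (C (27 : ℂ)) := Polynomial.isUnit_C.2 (isUnit_iff_ne_zero.2 (by norm_num))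
  set u : ℂ[X] := C 4 * a ^ 3 with hu
  set v : ℂ[X] := C 27 * b ^ 2 with hv
  set P : ℂ[X] := u + v with hP
  have hPmap : P = (4 * A ^ 3 + 27 * B ^ 2).map φ := by
    simp only [hP, hu, hv, ha, hb, Polynomial.map_add, Polynomial.map_mul, Polynomial.map_pow,
      Polynomial.map_ofNat, map_ofNat]
  have hDZ : (4 * A ^ 3 + 27 * B ^ 2 : Polynomial ℤ) ≠ 0 := fun h => hD (by rw [h, mul_zero])
  have hP0 : P ≠ 0 := by
    rw [hPmap, Ne, Polynomial.map_eq_zero_iff hinj]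
    exact hDZ
  have hu0 : u ≠ 0 := mul_ne_zero h4.ne_zero (pow_ne_zero _ ha0)
  have hv0 : v ≠ 0 := mul_ne_zero h27.ne_zero (pow_ne_zero _ hb0)
  -- all complex roots of P coincide
  have hroots : ∀ z w : ℂ, P.IsRoot z → P.IsRoot w → z = w := by
    intro z w hz hw
    by_contra hzw
    have key : ∀ x : ℂ, P.IsRoot x →
        Polynomial.aeval x ((-16 : Polynomial ℤ) * (4 * A ^ 3 + 27 * B ^ 2)) = 0 := by
      intro x hx
      have hx' : Polynomial.eval x ((4 * A ^ 3 + 27 * B ^ 2).map φ) = 0 := by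
        rw [← hPmap]; exact hx
      have : Polynomial.aeval x (4 * A ^ 3 + 27 * B ^ 2 : Polynomial ℤ) = 0 := by
        rw [Polynomial.aeval_def, ← Polynomial.eval_map]
        convert hx' using 2
        exact congrArg (fun f => Polynomial.map f _) (Subsingleton.elim _ _)
      simp [this]
    exact hcon z w hzw (key z hz) (key w hw)
  -- coprimality of the triple
  have hcuv : IsCoprime u v :=
    (isCoprime_mul_unit_left_left h4 _ _).2 ((isCoprime_mul_unit_left_right h27 _ _).2 hcopC.pow)
  have hbc : IsCoprime v (-P) := by
    have : IsCoprime v (u + v * 1) := hcuv.symm.add_mul_left_right 1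
    rw [mul_one] at this
    exact this.neg_right
  have hca : IsCoprime (-P) u := by
    have h1 : IsCoprime u (v + u * 1) := hcuv.add_mul_left_right 1
    rw [mul_one] at h1
    have h2 : IsCoprime u (u + v) := by rwa [add_comm] at h1
    exact h2.neg_right.symm
  have hsum : u + v + (-P) = 0 := by rw [hP]; ring
  -- degree bounds on the radicals
  have hradu : (radical u).natDegree ≤ a.natDegree := by
    have h1 : radical (C (4:ℂ) * a ^ 3) = radical (a ^ 3) := by
      exact radical_mul_of_isUnit_left h4
    rw [hu, h1, radical_pow a (by norm_num : 3 ≠ 0)]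
    exact Polynomial.natDegree_le_of_dvd (radical_dvd_self (a := a)) ha0
  have hradv : (radical v).natDegree ≤ b.natDegree := by
    have h1 : radical (C (27:ℂ) * b ^ 2) = radical (b ^ 2) := by
      exact radical_mul_of_isUnit_left h27
    rw [hv, h1, radical_pow b (by norm_num : 2 ≠ 0)]
    exact Polynomial.natDegree_le_of_dvd (radical_dvd_self (a := b)) hb0
  have hradP : (radical (-P)).natDegree ≤ 1 := by
    rw [UniqueFactorizationDomain.radical_neg]
    exact radical_natDegree_le_one hP0 hroots
  have hradbound : (radical (u * v * (-P))).natDegree ≤ a.natDegree + b.natDegree + 1 := by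
    rw [radical_mul (hca.symm.mul_left hbc).isRelPrime, radical_mul hcuv.isRelPrime,
      Polynomial.natDegree_mul (mul_ne_zero (radical_ne_zero (a := u)) (radical_ne_zero (a := v)))
        (radical_ne_zero (a := -P)),
      Polynomial.natDegree_mul (radical_ne_zero (a := u)) (radical_ne_zero (a := v))]
    omega
  -- Mason–Stothers
  have hdu : u.natDegree = 3 * a.natDegree := by
    rw [hu, Polynomial.natDegree_C_mul (by norm_num : (4:ℂ) ≠ 0), Polynomial.natDegree_pow]
  have hdv : v.natDegree = 2 * b.natDegree := by
    rw [hv, Polynomial.natDegree_C_mul (by norm_num : (27:ℂ) ≠ 0), Polynomial.natDegree_pow]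
  rcases Polynomial.abc hu0 hv0 (neg_ne_zero.2 hP0) hcuv hsum with
    ⟨h1, h2, _⟩ | ⟨hda, hdb, _⟩
  · -- degree inequalities force A, B constant
    have e1 : 3 * a.natDegree + 1 ≤ a.natDegree + b.natDegree + 1 := le_trans (hdu ▸ h1) hradbound
    have e2 : 2 * b.natDegree + 1 ≤ a.natDegree + b.natDegree + 1 := le_trans (hdv ▸ h2) hradbound
    exact hconst ⟨by omega, by omega⟩
  · -- derivative-zero case: everything constant
    have h1 : u.natDegree = 0 := Polynomial.natDegree_eq_zero_of_derivative_eq_zero hda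
    have h2 : v.natDegree = 0 := Polynomial.natDegree_eq_zero_of_derivative_eq_zero hdb
    rw [hdu] at h1; rw [hdv] at h2
    exact hconst ⟨by omega, by omega⟩
end
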